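/- If a product ∏_{i∈I} X_i of nonempty topological spaces is sg-compact, then either all factor spaces are finite, or exactly one factor space is infinite and sg-compact and all the remaining factor spaces are finite and locally indiscrete. -/

import Mathlib

open Set Topology

def SemiOpen {X : Type*} [TopologicalSpace X] (A : Set X) : Prop :=
  A ⊆ closure (interior A)

def SemiClosed {X : Type*} [TopologicalSpace X] (A : Set X) : Prop :=
  interior (closure A) ⊆ A

def scl {X : Type*} [TopologicalSpace X] (A : Set X) : Set X :=
  ⋂₀ {S | SemiClosed S ∧ A ⊆ S}

def sker {X : Type*} [TopologicalSpace X] (A : Set X) : Set X :=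
  ⋂₀ {S | SemiOpen S ∧ A ⊆ S}

def sint {X : Type*} [TopologicalSpace X] (A : Set X) : Set X :=
  ⋃₀ {S | SemiOpen S ∧ S ⊆ A}

def SgOpen {X : Type*} [TopologicalSpace X] (A : Set X) : Prop :=
  ∀ F : Set X, SemiClosed F → F ⊆ A → F ⊆ sint A

def SgClosed {X : Type*} [TopologicalSpace X] (A : Set X) : Prop :=
  scl A ⊆ sker A

def HSgClosed {X : Type*} [TopologicalSpace X] (A : Set X) : Prop :=
  ∀ B : Set X, B ⊆ A → SgClosed B

def SgCompact (X : Type*) [TopologicalSpace X] : Prop :=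
  ∀ 𝒰 : Set (Set X), (∀ U ∈ 𝒰, SgOpen U) → ⋃₀ 𝒰 = Set.univ →
    ∃ F ⊆ 𝒰, F.Finite ∧ ⋃₀ F = Set.univ

def LocallyIndiscrete (X : Type*) [TopologicalSpace X] : Prop :=
  ∀ U : Set X, IsOpen U → IsClosed U

def IndiscreteSpace (X : Type*) [TopologicalSpace X] : Prop :=
  ∀ U : Set X, IsOpen U → U = ∅ ∨ U = Set.univ

section Basic
variable {X : Type*} [TopologicalSpace X]

lemma semiClosed_closure (A : Set X) : SemiClosed (closure A) := by
  rw [SemiClosed, closure_closure]; exact interior_subset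

lemma subset_scl (A : Set X) : A ⊆ scl A := subset_sInter (fun S hS => hS.2)

lemma subset_sker (A : Set X) : A ⊆ sker A := subset_sInter (fun S hS => hS.2)

lemma scl_subset_closure (A : Set X) : scl A ⊆ closure A :=
  sInter_subset_of_mem ⟨semiClosed_closure A, subset_closure⟩

lemma semiClosed_scl (A : Set X) : SemiClosed (scl A) := by
  intro x hx
  refine mem_sInter.2 fun S hS => ?_
  have h1 : scl A ⊆ S := sInter_subset_of_mem hS
  exact hS.1 (interior_mono (closure_mono h1) hx)

lemma semiOpen_compl {S : Set X} (h : SemiClosed S) : SemiOpen Sᶜ := by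
  rw [SemiOpen, interior_compl, closure_compl]
  exact compl_subset_compl.2 h

lemma sgOpen_compl {A : Set X} (h : SgClosed A) : SgOpen Aᶜ := by
  intro F hF hFA
  have h1 : A ⊆ Fᶜ := subset_compl_comm.mp hFA
  have h2 : sker A ⊆ Fᶜ := sInter_subset_of_mem ⟨semiOpen_compl hF, h1⟩
  have h3 : scl A ⊆ Fᶜ := h.trans h2
  intro x hx
  exact mem_sUnion.2 ⟨(scl A)ᶜ, ⟨semiOpen_compl (semiClosed_scl A),
    compl_subset_compl.2 (subset_scl A)⟩, subset_compl_comm.mp h3 hx⟩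

lemma hsg_finite (hc : SgCompact X) {A : Set X} (hA : HSgClosed A) : A.Finite := by
  classical
  rcases A.eq_empty_or_nonempty with rfl | hne
  · exact finite_empty
  have hcov : ⋃₀ ((fun x => Aᶜ ∪ {x}) '' A) = univ := by
    ext y; simp only [mem_sUnion, mem_univ, iff_true]
    by_cases hy : y ∈ A
    · exact ⟨Aᶜ ∪ {y}, ⟨y, hy, rfl⟩, Or.inr rfl⟩
    · obtain ⟨a, ha⟩ := hne; exact ⟨Aᶜ ∪ {a}, ⟨a, ha, rfl⟩, Or.inl hy⟩
  have hop : ∀ U ∈ (fun x => Aᶜ ∪ {x}) '' A, SgOpen U := by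
    rintro U ⟨x, hx, rfl⟩
    have h1 : SgClosed (A \ {x}) := hA _ diff_subset
    have he : (A \ {x})ᶜ = Aᶜ ∪ {x} := by
      rw [diff_eq, compl_inter, compl_compl]
    show SgOpen (Aᶜ ∪ {x})
    rw [← he]
    exact sgOpen_compl h1
  obtain ⟨F, hF1, hF2, hF3⟩ := hc _ hop hcov
  have hsub : A ⊆ ⋃ S ∈ F, (S ∩ A) := by
    intro a ha
    have : a ∈ ⋃₀ F := hF3 ▸ mem_univ a
    obtain ⟨S, hS, haS⟩ := this
    exact mem_biUnion hS ⟨haS, ha⟩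
  refine Finite.subset (Finite.biUnion hF2 ?_) hsub
  intro S hS
  obtain ⟨x, hx, rfl⟩ := hF1 hS
  have : (Aᶜ ∪ {x}) ∩ A ⊆ {x} := by
    rintro y ⟨hy1 | hy1, hy2⟩
    · exact absurd hy2 hy1
    · exact hy1
  exact (finite_singleton x).subset this

lemma nwd_sgClosed {A B : Set X} (h : interior (closure A) = ∅) (hBA : B ⊆ A) :
    SgClosed B := by
  have hsc : SemiClosed B := by
    rw [SemiClosed]
    intro x hx
    exact absurd (h ▸ interior_mono (closure_mono hBA) hx) (notMem_empty x)
  have h1 : scl B ⊆ B := sInter_subset_of_mem ⟨hsc, Subset.rfl⟩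
  exact h1.trans (subset_sker B)

lemma nwd_finite (hc : SgCompact X) {A : Set X} (h : interior (closure A) = ∅) :
    A.Finite :=
  hsg_finite hc (fun _ hB => nwd_sgClosed h hB)

lemma li_isOpen_of_isClosed (hL : LocallyIndiscrete X) {C : Set X} (hC : IsClosed C) :
    IsOpen C := by
  have := hL Cᶜ hC.isOpen_compl
  simpa using this.isOpen_compl

lemma li_sgClosed (hL : LocallyIndiscrete X) (B : Set X) : SgClosed B := by
  refine (scl_subset_closure B).trans (subset_sInter fun S hS => ?_)
  have hSo : IsOpen S := by
    have h2 : closure (interior S) = interior S :=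
      IsClosed.closure_eq (hL _ isOpen_interior)
    have h3 := hS.1
    rw [SemiOpen, h2] at h3
    have h4 : S = interior S := Subset.antisymm h3 interior_subset
    rw [h4]; exact isOpen_interior
  exact closure_minimal hS.2 (hL S hSo)

lemma li_finite (hc : SgCompact X) (hL : LocallyIndiscrete X) : Finite X := by
  have : (univ : Set X).Finite := hsg_finite hc (fun B _ => li_sgClosed hL B)
  exact Set.finite_univ_iff.mp this

lemma li_mem_closure_symm (hL : LocallyIndiscrete X) {a b : X}
    (h : a ∈ closure {b}) : b ∈ closure {a} := by
  by_contra hb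
  rw [mem_closure_iff] at hb
  push_neg at hb
  obtain ⟨W, hWo, hbW, hWa⟩ := hb
  have haW : a ∉ W := by
    intro ha; exact (eq_empty_iff_forall_notMem.mp hWa a) ⟨ha, rfl⟩
  have : closure {b} ⊆ W := closure_minimal (singleton_subset_iff.2 hbW) (hL W hWo)
  exact haW (this h)

lemma li_closure_singleton_eq (hL : LocallyIndiscrete X) {a b : X}
    (h : a ∈ closure {b}) : closure {a} = closure {b} := by
  refine Subset.antisymm
    (closure_minimal (singleton_subset_iff.2 h) isClosed_closure)
    (closure_minimal (singleton_subset_iff.2 (li_mem_closure_symm hL h)) isClosed_closure)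

lemma indiscrete_closure_singleton (hI : IndiscreteSpace X) (a : X) :
    closure {a} = univ := by
  rcases hI (closure {a})ᶜ isClosed_closure.isOpen_compl with h | h
  · rw [← compl_empty, ← h, compl_compl]
  · have ha : a ∈ closure {a} := subset_closure rfl
    have : a ∈ (closure {a})ᶜ := h ▸ mem_univ a
    exact absurd ha this

end Basic
section Pi
variable {I : Type*} {X : I → Type*} [∀ i, TopologicalSpace (X i)] [∀ i, Nonempty (X i)]

lemma step1 (hc : SgCompact (∀ i, X i)) {i j : I} (hij : i ≠ j)
    (hj : Infinite (X j)) : LocallyIndiscrete (X i) := by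
  classical
  intro U hU
  by_contra hcl
  have hne : ∃ p, p ∈ closure U ∧ p ∉ U := by
    by_contra hn
    push_neg at hn
    exact hcl (closure_subset_iff_isClosed.mp (fun x hx => by
      by_contra hxU
      exact hxU (hn x hx)))
  obtain ⟨p, hp1, hp2⟩ := hne
  set C := closure ({p} : Set (X i)) with hC
  have hCc : IsClosed C := isClosed_closure
  have hCsub : C ⊆ closure U ∩ Uᶜ :=
    closure_minimal (singleton_subset_iff.2 ⟨hp1, hp2⟩)
      (isClosed_closure.inter (isClosed_compl_iff.2 hU))
  have hbd : interior (closure U ∩ Uᶜ) = ∅ := by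
    ext x
    simp only [mem_empty_iff_false, iff_false]
    intro hx
    have hWU : interior (closure U ∩ Uᶜ) ∩ U = ∅ := by
      rw [eq_empty_iff_forall_notMem]
      rintro y ⟨hy1, hy2⟩
      exact (interior_subset hy1).2 hy2
    have h1 : x ∈ interior (closure U ∩ Uᶜ) ∩ closure U :=
      ⟨hx, (interior_subset hx).1⟩
    have h2 := isOpen_interior.inter_closure h1
    rw [hWU, closure_empty] at h2
    exact h2
  have hCint : interior C = ∅ :=
    eq_empty_of_subset_empty (hbd ▸ interior_mono hCsub)
  set N : Set (∀ k, X k) := (fun f => f i) ⁻¹' C with hN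
  have hNc : IsClosed N := hCc.preimage (continuous_apply i)
  have hNint : interior N = ∅ := by
    ext f
    simp only [mem_empty_iff_false, iff_false]
    intro hf
    have hcont : Continuous (fun x : X i => Function.update f i x) :=
      continuous_const.update i continuous_id
    have hsub : (fun x : X i => Function.update f i x) ⁻¹' interior N ⊆ C := by
      intro x hx
      have h1 : Function.update f i x ∈ N := interior_subset hx
      simpa [hN, Function.update_self] using h1
    have hmem : f i ∈ (fun x : X i => Function.update f i x) ⁻¹' interior N := by
      simpa [Function.update_eq_self] using hf
    have : f i ∈ interior C :=
      interior_maximal hsub (isOpen_interior.preimage hcont) hmem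
    rw [hCint] at this
    exact this
  have hNfin : N.Finite := nwd_finite hc (by rw [hNc.closure_eq]; exact hNint)
  have hNinf : N.Infinite := by
    have g0 : ∀ k, X k := fun k => Classical.arbitrary _
    set g := Function.update g0 i p with hg
    refine Set.infinite_of_injective_forall_mem
      (f := fun x : X j => Function.update g j x)
      (Function.update_injective g j) (fun x => ?_)
    show Function.update g j x i ∈ C
    rw [Function.update_of_ne hij, hg, Function.update_self]
    exact subset_closure rfl
  exact hNinf hNfin

lemma exists_pi_point (κ : ℕ → I) (hκ : Function.Injective κ)
    (C : ∀ m, Set (X (κ m))) (hC : ∀ m, (C m).Nonempty) :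
    ∃ f : ∀ k, X k, ∀ m, f (κ m) ∈ C m := by
  classical
  set B : ∀ k, Set (X k) := fun k => ⋂ m, ⋂ (e : κ m = k), (e ▸ C m) with hB
  have hBne : ∀ k, (B k).Nonempty := by
    intro k
    by_cases h : ∃ m, κ m = k
    · obtain ⟨m, rfl⟩ := h
      obtain ⟨x, hx⟩ := hC m
      refine ⟨x, mem_iInter.2 fun m' => mem_iInter.2 fun e => ?_⟩
      have hm : m' = m := hκ e
      subst hm
      have he : e = rfl := Subsingleton.elim _ _
      rw [he]
      exact hx
    · exact ⟨Classical.arbitrary _,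
        mem_iInter.2 fun m => mem_iInter.2 fun e => absurd ⟨m, e⟩ h⟩
  obtain ⟨f, hf⟩ := Set.univ_pi_nonempty_iff.2 hBne
  refine ⟨f, fun m => ?_⟩
  have h1 : f (κ m) ∈ B (κ m) := Set.mem_univ_pi.mp hf (κ m)
  exact mem_iInter.mp (mem_iInter.mp h1 m) rfl

lemma not_sgCompact_of_many_clopen
    (hinf : {i : I | ∃ U : Set (X i),
      IsOpen U ∧ IsClosed U ∧ U.Nonempty ∧ Uᶜ.Nonempty}.Infinite) :
    ¬ SgCompact (∀ i, X i) := by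
  classical
  intro hc
  set T := {i : I | ∃ U : Set (X i), IsOpen U ∧ IsClosed U ∧ U.Nonempty ∧ Uᶜ.Nonempty}
    with hT
  let e := hinf.natEmbedding
  set κ : ℕ → I := fun m => (e m : T) with hκdef
  have hκ : Function.Injective κ := fun a b hab => e.injective (Subtype.ext hab)
  have hκT : ∀ m, κ m ∈ T := fun m => (e m).2
  choose U hUo hUc hUne hUcne using hκT
  have hz : ∀ n, ∃ f : ∀ k, X k,
      ∀ m, f (κ m) ∈ (if m = n then U m else (U m)ᶜ) := by
    intro n
    refine exists_pi_point κ hκ _ fun m => ?_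
    by_cases h : m = n <;> simp [h, hUne, hUcne]
  choose z hzspec using hz
  have hz_self : ∀ n, z n (κ n) ∈ U n := fun n => by simpa using hzspec n n
  have hz_ne : ∀ n m, m ≠ n → z n (κ m) ∈ (U m)ᶜ := fun n m hmn => by
    simpa [hmn] using hzspec n m
  have hzinj : Function.Injective z := by
    intro a b hab
    by_contra hne
    have h1 := hz_self a
    rw [hab] at h1
    exact hz_ne b a hne h1
  set S := Set.range z with hS
  set Cpat : Set (∀ k, X k) :=
    ⋂ (p : ℕ × ℕ), ⋂ (_ : p.1 ≠ p.2),
      ((fun f => f (κ p.1)) ⁻¹' (U p.1) ∩ (fun f => f (κ p.2)) ⁻¹' (U p.2))ᶜ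
    with hCpat
  have hSC : S ⊆ Cpat := by
    rintro _ ⟨n, rfl⟩
    refine mem_iInter.2 fun p => mem_iInter.2 fun hp => ?_
    rintro ⟨h1, h2⟩
    have e1 : p.1 = n := by
      by_contra hh; exact hz_ne n p.1 hh h1
    have e2 : p.2 = n := by
      by_contra hh; exact hz_ne n p.2 hh h2
    exact hp (e1.trans e2.symm)
  have hCclosed : IsClosed Cpat := by
    refine isClosed_iInter fun p => isClosed_iInter fun hp => ?_
    exact (IsOpen.inter ((hUo p.1).preimage (continuous_apply _))
      ((hUo p.2).preimage (continuous_apply _))).isClosed_compl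
  have hint : interior Cpat = ∅ := by
    ext f
    simp only [mem_empty_iff_false, iff_false]
    intro hf
    obtain ⟨E, W, hW, hsub⟩ := isOpen_pi_iff.mp isOpen_interior f hf
    have hEfin : (κ ⁻¹' (E : Set I)).Finite := E.finite_toSet.preimage hκ.injOn
    have hinf2 : (κ ⁻¹' (E : Set I))ᶜ.Infinite := hEfin.infinite_compl
    obtain ⟨m, hm⟩ := hinf2.nonempty
    obtain ⟨m', hm'⟩ := (hinf2.diff (finite_singleton m)).nonempty
    have hmm' : m ≠ m' := fun hh => hm'.2 (by simp [hh])
    have hκmm' : κ m ≠ κ m' := fun hh => hmm' (hκ hh)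
    obtain ⟨u1, hu1⟩ := hUne m
    obtain ⟨u2, hu2⟩ := hUne m'
    set f' := Function.update (Function.update f (κ m) u1) (κ m') u2 with hf'
    have hf'E : ∀ a ∈ E, f' a = f a := by
      intro a ha
      have h1 : a ≠ κ m := fun hh => hm (by rw [hh] at ha; simpa using ha)
      have h2 : a ≠ κ m' := fun hh => hm'.1 (by rw [hh] at ha; simpa using ha)
      rw [hf', Function.update_of_ne h2, Function.update_of_ne h1]
    have hf'm : f' (κ m) ∈ U m := by
      rw [hf', Function.update_of_ne hκmm', Function.update_self]
      exact hu1
    have hf'm' : f' (κ m') ∈ U m' := by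
      rw [hf', Function.update_self]
      exact hu2
    have hf'in : f' ∈ (E : Set I).pi W := fun a ha => by
      rw [hf'E a ha]; exact (hW a ha).2
    have hf'C : f' ∈ Cpat := interior_subset (hsub hf'in)
    have := mem_iInter.mp (mem_iInter.mp hf'C (m, m')) hmm'
    exact this ⟨hf'm, hf'm'⟩
  have hSnwd : interior (closure S) = ∅ := by
    have h1 : closure S ⊆ Cpat := closure_minimal hSC hCclosed
    exact eq_empty_of_subset_empty (hint ▸ interior_mono h1)
  exact (Set.infinite_range_of_injective hzinj) (nwd_finite hc hSnwd)

end Pi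
section Pi2
variable {I : Type*} {X : I → Type*} [∀ i, TopologicalSpace (X i)] [∀ i, Nonempty (X i)]

/-- Minimal-neighbourhood property: if every factor is locally indiscrete, then
any point `g` all of whose coordinates are in the closures of the coordinates of `f`
belongs to every open set containing `f`. -/
lemma min_nbhd (hL : ∀ k, LocallyIndiscrete (X k)) {O : Set (∀ i, X i)}
    (hO : IsOpen O) {f : ∀ i, X i} (hf : f ∈ O) {g : ∀ i, X i}
    (hg : ∀ k, g k ∈ closure {f k}) : g ∈ O := by
  obtain ⟨E, W, hW, hsub⟩ := isOpen_pi_iff.mp hO f hf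
  refine hsub (fun a ha => ?_)
  have h1 : closure {f a} ⊆ W a :=
    closure_minimal (singleton_subset_iff.2 (hW a ha).2) (hL a (W a) (hW a ha).1)
  exact h1 (hg a)

lemma not_sgCompact_allLI (hL : ∀ k, LocallyIndiscrete (X k)) (j : I)
    (hj : Infinite (X j)) : ¬ SgCompact (∀ i, X i) := by
  classical
  intro hc
  by_cases hJ : {k : I | ¬ IndiscreteSpace (X k)}.Finite
  · -- the product is locally indiscrete
    have hPli : LocallyIndiscrete (∀ i, X i) := by
      intro O hO
      refine closure_subset_iff_isClosed.mp (fun f hf => ?_)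
      set B : Set (∀ i, X i) :=
        ⋂ k ∈ {k : I | ¬ IndiscreteSpace (X k)}, (fun g => g k) ⁻¹' closure {f k}
        with hBdef
      have hBopen : IsOpen B :=
        hJ.isOpen_biInter fun k _ =>
          (li_isOpen_of_isClosed (hL k) isClosed_closure).preimage (continuous_apply k)
      have hfB : f ∈ B :=
        mem_iInter₂.2 fun k _ => subset_closure rfl
      obtain ⟨g, hgB, hgO⟩ := mem_closure_iff.mp hf B hBopen hfB
      have hgcl : ∀ k, g k ∈ closure {f k} := by
        intro k
        by_cases hk : IndiscreteSpace (X k)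
        · rw [indiscrete_closure_singleton hk]; exact mem_univ _
        · exact mem_iInter₂.mp hgB k hk
      exact min_nbhd hL hO hgO (fun k => li_mem_closure_symm (hL k) (hgcl k))
    have hPinf : Infinite (∀ i, X i) := by
      have g0 : ∀ k, X k := fun k => Classical.arbitrary _
      exact Infinite.of_injective (fun x : X j => Function.update g0 j x)
        (Function.update_injective g0 j)
    exact not_finite_iff_infinite.mpr hPinf (li_finite hc hPli)
  · refine not_sgCompact_of_many_clopen (Set.Infinite.mono ?_ hJ) hc
    intro k hk
    rw [mem_setOf_eq, IndiscreteSpace] at hk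
    push_neg at hk
    obtain ⟨U, hUo, hU1, hU2⟩ := hk
    exact ⟨U, hUo, hL k U hUo, hU1, nonempty_compl.2 hU2⟩

variable (j : I)

/-- The "tube" over `U` through the point `f`. -/
def Tube (f : ∀ i, X i) (U : Set (X j)) : Set (∀ i, X i) :=
  {g | g j ∈ U ∧ ∀ i, i ≠ j → g i ∈ closure {f i}}

variable {j}

lemma tube_open (hli : ∀ i, i ≠ j → LocallyIndiscrete (X i))
    (hJfin : {i : I | i ≠ j ∧ ¬ IndiscreteSpace (X i)}.Finite)
    (f : ∀ i, X i) {U : Set (X j)} (hU : IsOpen U) : IsOpen (Tube j f U) := by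
  classical
  have heq : Tube j f U = (fun g : ∀ i, X i => g j) ⁻¹' U ∩
      ⋂ i ∈ {i : I | i ≠ j ∧ ¬ IndiscreteSpace (X i)},
        (fun g : ∀ i', X i' => g i) ⁻¹' closure {f i} := by
    ext g
    constructor
    · rintro ⟨h1, h2⟩
      exact ⟨h1, mem_iInter₂.2 fun i hi => h2 i hi.1⟩
    · rintro ⟨h1, h2⟩
      refine ⟨h1, fun i hi => ?_⟩
      by_cases hind : IndiscreteSpace (X i)
      · rw [indiscrete_closure_singleton hind]; exact mem_univ _
      · exact mem_iInter₂.mp h2 i ⟨hi, hind⟩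
  rw [heq]
  refine (hU.preimage (continuous_apply j)).inter
    (hJfin.isOpen_biInter fun i hi =>
      (li_isOpen_of_isClosed (hli i hi.1) isClosed_closure).preimage (continuous_apply i))

lemma tube_basis (hli : ∀ i, i ≠ j → LocallyIndiscrete (X i))
    (f : ∀ i, X i) {O : Set (∀ i, X i)} (hO : IsOpen O) (hf : f ∈ O) :
    ∃ U : Set (X j), IsOpen U ∧ f j ∈ U ∧ Tube j f U ⊆ O := by
  classical
  obtain ⟨E, W, hW, hsub⟩ := isOpen_pi_iff.mp hO f hf
  refine ⟨if j ∈ E then W j else univ, ?_, ?_, ?_⟩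
  · split
    · exact (hW j (by assumption)).1
    · exact isOpen_univ
  · split
    · exact (hW j (by assumption)).2
    · exact mem_univ _
  · intro g hg
    refine hsub (fun a ha => ?_)
    by_cases haj : a = j
    · subst haj
      have := hg.1
      rw [if_pos (Finset.mem_coe.mp ha)] at this
      exact this
    · have h1 : closure {f a} ⊆ W a :=
        closure_minimal (singleton_subset_iff.2 (hW a ha).2)
          (hli a haj (W a) (hW a ha).1)
      exact h1 (hg.2 a haj)

lemma tube_closure (hli : ∀ i, i ≠ j → LocallyIndiscrete (X i))
    (f : ∀ i, X i) (A : Set (X j)) {g : ∀ i, X i}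
    (hgc : ∀ i, i ≠ j → g i ∈ closure {f i}) (hgj : g j ∈ closure A) :
    g ∈ closure (Tube j f A) := by
  classical
  rw [mem_closure_iff]
  intro O hO hgO
  obtain ⟨U, hUo, hgU, hUsub⟩ := tube_basis hli g hO hgO
  obtain ⟨y, hyU, hyA⟩ := mem_closure_iff.mp hgj U hUo hgU
  refine ⟨Function.update g j y, hUsub ⟨?_, ?_⟩, ?_, ?_⟩
  · rw [Function.update_self]; exact hyU
  · intro i hi
    rw [Function.update_of_ne hi]
    exact subset_closure rfl
  · rw [Function.update_self]; exact hyA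
  · intro i hi
    rw [Function.update_of_ne hi]
    exact hgc i hi

lemma tube_semiOpen (hli : ∀ i, i ≠ j → LocallyIndiscrete (X i))
    (hJfin : {i : I | i ≠ j ∧ ¬ IndiscreteSpace (X i)}.Finite)
    (f : ∀ i, X i) {S : Set (X j)} (hS : SemiOpen S) : SemiOpen (Tube j f S) := by
  intro g hg
  have h1 : g j ∈ closure (interior S) := hS hg.1
  have h2 : g ∈ closure (Tube j f (interior S)) :=
    tube_closure hli f (interior S) hg.2 h1
  have h3 : Tube j f (interior S) ⊆ interior (Tube j f S) :=
    interior_maximal (fun g' hg' => ⟨interior_subset hg'.1, hg'.2⟩)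
      (tube_open hli hJfin f isOpen_interior)
  exact closure_mono h3 h2

lemma sgOpen_preimage (hli : ∀ i, i ≠ j → LocallyIndiscrete (X i))
    (hJfin : {i : I | i ≠ j ∧ ¬ IndiscreteSpace (X i)}.Finite)
    {V : Set (X j)} (hV : SgOpen V) :
    SgOpen ((fun f : ∀ i, X i => f j) ⁻¹' V) := by
  classical
  intro F hF hFV f hf
  set G : Set (X j) :=
    {y | ∃ g, g ∈ F ∧ g j = y ∧ ∀ i, i ≠ j → g i ∈ closure {f i}} with hG
  have hGV : G ⊆ V := by
    rintro y ⟨g, hgF, rfl, _⟩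
    exact hFV hgF
  have hfG : f j ∈ G := ⟨f, hf, rfl, fun i _ => subset_closure rfl⟩
  have hGsc : SemiClosed G := by
    intro x hx
    set h := Function.update f j x with hh
    have hcoords : ∀ i, i ≠ j → h i ∈ closure {f i} := by
      intro i hi
      rw [hh, Function.update_of_ne hi]
      exact subset_closure rfl
    have hTsub : Tube j f (interior (closure G)) ⊆ closure F := by
      intro g hg
      rw [mem_closure_iff]
      intro O hO hgO
      obtain ⟨U, hUo, hgU, hUsub⟩ := tube_basis hli g hO hgO
      have hgj : g j ∈ closure G := interior_subset hg.1
      obtain ⟨y, hyU, hyG⟩ := mem_closure_iff.mp hgj U hUo hgU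
      obtain ⟨g', hg'F, hg'j, hg'c⟩ := hyG
      refine ⟨g', hUsub ⟨?_, ?_⟩, hg'F⟩
      · rw [hg'j]; exact hyU
      · intro i hi
        rw [li_closure_singleton_eq (hli i hi) (hg.2 i hi)]
        exact hg'c i hi
    have hhT : h ∈ Tube j f (interior (closure G)) := by
      refine ⟨?_, hcoords⟩
      rw [hh, Function.update_self]
      exact hx
    have hhF : h ∈ F :=
      hF (interior_maximal hTsub (tube_open hli hJfin f isOpen_interior) hhT)
    exact ⟨h, hhF, by rw [hh, Function.update_self], hcoords⟩
  have hGss : G ⊆ sint V := hV G hGsc hGV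
  obtain ⟨S, ⟨hSso, hSV⟩, hfS⟩ := mem_sUnion.mp (hGss hfG)
  refine mem_sUnion.2 ⟨Tube j f S, ⟨tube_semiOpen hli hJfin f hSso, ?_⟩, ?_, ?_⟩
  · intro g hg
    exact hSV hg.1
  · exact hfS
  · exact fun i _ => subset_closure rfl

lemma step3 (hc : SgCompact (∀ i, X i))
    (hli : ∀ i, i ≠ j → LocallyIndiscrete (X i)) : SgCompact (X j) := by
  classical
  have hJfin : {i : I | i ≠ j ∧ ¬ IndiscreteSpace (X i)}.Finite := by
    by_contra hJ
    refine not_sgCompact_of_many_clopen (Set.Infinite.mono ?_ hJ) hc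
    rintro k ⟨hkj, hk⟩
    rw [IndiscreteSpace] at hk
    push_neg at hk
    obtain ⟨U, hUo, hU1, hU2⟩ := hk
    exact ⟨U, hUo, hli k hkj U hUo, hU1, nonempty_compl.2 hU2⟩
  intro 𝒱 h𝒱 hcov
  have g0 : ∀ k, X k := fun k => Classical.arbitrary _
  obtain ⟨G, hG1, hG2, hG3⟩ := hc ((fun V => (fun f : ∀ i, X i => f j) ⁻¹' V) '' 𝒱)
    (by
      rintro _ ⟨V, hV, rfl⟩
      exact sgOpen_preimage hli hJfin (h𝒱 V hV))
    (by
      ext f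
      simp only [mem_sUnion, mem_univ, iff_true, mem_image]
      have : f j ∈ ⋃₀ 𝒱 := hcov ▸ mem_univ _
      obtain ⟨V, hV, hfV⟩ := this
      exact ⟨_, ⟨V, hV, rfl⟩, hfV⟩)
  refine ⟨{V ∈ 𝒱 | (fun f : ∀ i, X i => f j) ⁻¹' V ∈ G}, fun V hV => hV.1, ?_, ?_⟩
  · have hsurj : Function.Surjective (fun f : ∀ i, X i => f j) :=
      fun x => ⟨Function.update g0 j x, Function.update_self j x g0⟩
    refine Set.Finite.of_finite_image (hG2.subset ?_) (hsurj.preimage_injective.injOn)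
    rintro _ ⟨V, hV, rfl⟩
    exact hV.2
  · ext x
    simp only [mem_sUnion, mem_univ, iff_true]
    have h1 : Function.update g0 j x ∈ ⋃₀ G := hG3 ▸ mem_univ _
    obtain ⟨Wt, hWG, hfW⟩ := h1
    obtain ⟨V, hV𝒱, rfl⟩ := hG1 hWG
    refine ⟨V, ⟨hV𝒱, hWG⟩, ?_⟩
    have : Function.update g0 j x j ∈ V := hfW
    rwa [Function.update_self] at this

end Pi2
theorem stmt_13 {I : Type*} (X : I → Type*) [∀ i, TopologicalSpace (X i)]
    [∀ i, Nonempty (X i)]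
    (h : SgCompact (∀ i, X i)) :
    (∀ i, Finite (X i)) ∨
      ∃ j, Infinite (X j) ∧ SgCompact (X j) ∧
        ∀ i, i ≠ j → Finite (X i) ∧ LocallyIndiscrete (X i) := by
  classical
  by_cases hall : ∀ i, Finite (X i)
  · exact Or.inl hall
  · push_neg at hall
    obtain ⟨j, hj⟩ := hall
    have hjinf : Infinite (X j) := hj
    have hli : ∀ i, i ≠ j → LocallyIndiscrete (X i) := fun i hij => step1 h hij hjinf
    have hfin : ∀ i, i ≠ j → Finite (X i) := by
      intro i hij
      by_contra hif
      have hiinf : Infinite (X i) := not_finite_iff_infinite.mp hif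
      have hLall : ∀ k, LocallyIndiscrete (X k) := by
        intro k
        by_cases hkj : k = j
        · subst hkj
          exact step1 h (Ne.symm hij) hiinf
        · exact step1 h hkj hjinf
      exact not_sgCompact_allLI hLall j hjinf h
    exact Or.inr ⟨j, hjinf, step3 h hli, fun i hij => ⟨hfin i hij, hli i hij⟩⟩
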